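/- In the linearized setup, let B_j denote the j-th column of B with the (j,j) entry removed. Then max_{j=1}^N ‖B_j‖ ≺ 1. -/

import Mathlib

open MeasureTheory ProbabilityTheory Filter Matrix
open scoped Classical BigOperators ENNReal

noncomputable section

lemma aux_prod_pow {Ω ι : Type*} [MeasurableSpace Ω] {P : Measure Ω} [IsProbabilityMeasure P]
    {f : ι → Ω → ℝ}
    (hindep : iIndepFun f P)
    (hmeas : ∀ i, Measurable (f i))
    (hint : ∀ (i : ι) (e : ℕ), Integrable (fun ω => f i ω ^ e) P)
    (e : ι → ℕ) (S : Finset ι) :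
    Integrable (fun ω => ∏ q ∈ S, f q ω ^ e q) P ∧
      ∫ ω, ∏ q ∈ S, f q ω ^ e q ∂P = ∏ q ∈ S, ∫ ω, f q ω ^ e q ∂P := by
  classical
  have gindep : iIndepFun
      (fun q => (fun x : ℝ => x ^ e q) ∘ f q) P :=
    hindep.comp _ (fun q => measurable_id.pow_const (e q))
  have gmeas : ∀ q, Measurable ((fun x : ℝ => x ^ e q) ∘ f q) :=
    fun q => (hmeas q).pow_const (e q)
  induction S using Finset.induction with
  | empty => simp
  | @insert i s hi ih =>
    have hsep : IndepFun (∏ q ∈ s, (fun x : ℝ => x ^ e q) ∘ f q)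
        ((fun x : ℝ => x ^ e i) ∘ f i) P :=
      gindep.indepFun_finsetProd_of_notMem gmeas hi
    have hprodeq : (∏ q ∈ s, (fun x : ℝ => x ^ e q) ∘ f q) = fun ω => ∏ q ∈ s, f q ω ^ e q := by
      funext ω; simp [Finset.prod_apply]
    have hsep' : IndepFun (fun ω => f i ω ^ e i) (fun ω => ∏ q ∈ s, f q ω ^ e q) P := by
      rw [hprodeq] at hsep
      exact hsep.symm
    have hmul : Integrable ((fun ω => f i ω ^ e i) * (fun ω => ∏ q ∈ s, f q ω ^ e q)) P :=
      hsep'.integrable_mul (hint i (e i)) ih.1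
    constructor
    · refine hmul.congr (ae_of_all _ fun ω => ?_)
      simp [Finset.prod_insert hi]
    · rw [Finset.prod_insert hi, ← ih.2]
      have := hsep'.integral_mul_eq_mul_integral (hint i (e i)).aestronglyMeasurable ih.1.aestronglyMeasurable
      calc ∫ ω, ∏ q ∈ insert i s, f q ω ^ e q ∂P
          = ∫ ω, ((fun ω => f i ω ^ e i) * fun ω => ∏ q ∈ s, f q ω ^ e q) ω ∂P := by
            congr 1; funext ω; simp [Finset.prod_insert hi]
        _ = _ := by rw [this]


lemma aux_moment {Ω : Type*} [MeasurableSpace Ω] {P : Measure Ω} [IsProbabilityMeasure P]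
    {μ0 : Measure ℝ} [IsProbabilityMeasure μ0]
    (hmom : ∀ p : ℕ, Integrable (fun x => |x| ^ p) μ0)
    {g : Ω → ℝ} (hgm : Measurable g) (hlaw : Measure.map g P = μ0) (e : ℕ) :
    Integrable (fun ω => g ω ^ e) P ∧ ∫ ω, g ω ^ e ∂P = ∫ x, x ^ e ∂μ0 := by
  have hm : Measurable (fun x : ℝ => x ^ e) := measurable_id.pow_const e
  have h1 : Integrable (fun x : ℝ => x ^ e) μ0 := by
    refine (hmom e).mono hm.aestronglyMeasurable (ae_of_all _ fun x => ?_)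
    simp [abs_pow, le_abs_self, abs_nonneg]
  have h2 : Integrable ((fun x : ℝ => x ^ e) ∘ g) P := by
    rw [← hlaw] at h1
    exact (integrable_map_measure h1.aestronglyMeasurable hgm.aemeasurable).mp h1
  refine ⟨h2, ?_⟩
  have hsm : AEStronglyMeasurable (fun x : ℝ => x ^ e) (Measure.map g P) :=
    hm.aestronglyMeasurable
  rw [← hlaw, integral_map hgm.aemeasurable hsm]

lemma aux_prod_reindex {κ : Type*} [DecidableEq κ] {m : ℕ} (s : Fin m → Finset κ) (Y : κ → ℝ) :
    ∏ t, ∏ a ∈ s t, Y a =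
      ∏ a ∈ Finset.univ.biUnion s, Y a ^ ({t | a ∈ s t} : Finset (Fin m)).card := by
  classical
  have hsub : ∀ t, s t ⊆ Finset.univ.biUnion s := fun t a ha =>
    Finset.mem_biUnion.mpr ⟨t, Finset.mem_univ t, ha⟩
  have h1 : ∀ t, ∏ a ∈ s t, Y a =
      ∏ a ∈ Finset.univ.biUnion s, Y a ^ (if a ∈ s t then 1 else 0) := by
    intro t
    calc ∏ a ∈ s t, Y a
        = ∏ a ∈ Finset.univ.biUnion s ∩ s t, Y a := by
          rw [Finset.inter_eq_right.mpr (hsub t)]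
      _ = ∏ a ∈ Finset.univ.biUnion s, if a ∈ s t then Y a else 1 :=
          (Finset.prod_ite_mem _ _ _).symm
      _ = _ := by
          refine Finset.prod_congr rfl fun a _ => ?_
          split_ifs <;> simp
  calc ∏ t, ∏ a ∈ s t, Y a
      = ∏ t, ∏ a ∈ Finset.univ.biUnion s, Y a ^ (if a ∈ s t then 1 else 0) :=
        Finset.prod_congr rfl fun t _ => h1 t
    _ = ∏ a ∈ Finset.univ.biUnion s, ∏ t, Y a ^ (if a ∈ s t then 1 else 0) :=
        Finset.prod_comm
    _ = _ := by
        refine Finset.prod_congr rfl fun a _ => ?_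
        rw [Finset.prod_pow_eq_pow_sum]
        congr 1
        rw [Finset.card_filter]

lemma aux_mult_sum {κ : Type*} [DecidableEq κ] {m : ℕ} (s : Fin m → Finset κ) :
    ∑ a ∈ Finset.univ.biUnion s, ({t | a ∈ s t} : Finset (Fin m)).card =
      ∑ t, (s t).card := by
  classical
  have h : ∀ a ∈ Finset.univ.biUnion s, ({t | a ∈ s t} : Finset (Fin m)).card
      = ∑ t, if a ∈ s t then 1 else 0 := by
    intro a _; rw [Finset.card_filter]
  rw [Finset.sum_congr rfl h, Finset.sum_comm]
  refine Finset.sum_congr rfl fun t _ => ?_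
  rw [← Finset.card_filter, Finset.filter_mem_eq_inter,
    Finset.inter_eq_right.mpr (fun a ha => Finset.mem_biUnion.mpr ⟨t, Finset.mem_univ t, ha⟩)]


lemma aux_count {d m K : ℕ} (hd : 1 ≤ d) {β : Type*} [Fintype β]
    (F : β → Fin m → Finset (Fin d)) (hFinj : Function.Injective F)
    (hFcard : ∀ b, (Finset.univ.biUnion (F b)).card ≤ K) :
    ∑ b : β, ((d : ℝ)⁻¹) ^ (Finset.univ.biUnion (F b)).card
      ≤ (K + 1 : ℝ) * ((2 : ℝ) ^ m) ^ K := by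
  classical
  set A : β → Finset (Fin d) := fun b => Finset.univ.biUnion (F b) with hA
  set x : ℝ := (2 : ℝ) ^ m * (d : ℝ)⁻¹ with hx
  have hdpos : (0 : ℝ) < d := by exact_mod_cast hd
  have hxnn : 0 ≤ x := by positivity
  have h2m1 : (1 : ℝ) ≤ (2 : ℝ) ^ m := one_le_pow₀ (by norm_num)
  have step1 : ∑ b : β, ((d : ℝ)⁻¹) ^ (A b).card
      = ∑ J : Finset (Fin d), ∑ b ∈ Finset.univ.filter (fun b => A b = J),
          ((d : ℝ)⁻¹) ^ (A b).card :=
    (Finset.sum_fiberwise _ _ _).symm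
  have step2 : ∀ J : Finset (Fin d),
      (∑ b ∈ Finset.univ.filter (fun b => A b = J), ((d : ℝ)⁻¹) ^ (A b).card)
        ≤ if J.card ≤ K then x ^ J.card else 0 := by
    intro J
    rcases (Finset.univ.filter (fun b => A b = J)).eq_empty_or_nonempty with he | hne
    · rw [he, Finset.sum_empty]
      split_ifs <;> positivity
    · obtain ⟨b0, hb0⟩ := hne
      have hb0' : A b0 = J := (Finset.mem_filter.mp hb0).2
      have hcJ : J.card ≤ K := hb0' ▸ hFcard b0
      rw [if_pos hcJ]
      have hsum : ∑ b ∈ Finset.univ.filter (fun b => A b = J), ((d : ℝ)⁻¹) ^ (A b).card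
          = (Finset.univ.filter (fun b => A b = J)).card * ((d : ℝ)⁻¹) ^ J.card := by
        rw [Finset.sum_congr rfl (fun b hb => by
          rw [(Finset.mem_filter.mp hb).2]), Finset.sum_const, nsmul_eq_mul]
      rw [hsum]
      have hcard : (Finset.univ.filter (fun b => A b = J)).card
          ≤ (Fintype.piFinset (fun _ : Fin m => J.powerset)).card := by
        refine Finset.card_le_card_of_injOn F ?_ ?_
        · intro b hb
          rw [Finset.mem_coe] at hb
          rw [Finset.mem_coe, Fintype.mem_piFinset]
          intro t
          rw [Finset.mem_powerset, ← (Finset.mem_filter.mp hb).2]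
          exact fun a ha => Finset.mem_biUnion.mpr ⟨t, Finset.mem_univ t, ha⟩
        · exact fun b _ b' _ h => hFinj h
      have hcard2 : (Fintype.piFinset (fun _ : Fin m => J.powerset)).card
          = (2 ^ J.card) ^ m := by
        rw [Fintype.card_piFinset]
        simp [Finset.card_powerset]
      calc ((Finset.univ.filter (fun b => A b = J)).card : ℝ) * ((d : ℝ)⁻¹) ^ J.card
          ≤ ((2 ^ J.card) ^ m : ℕ) * ((d : ℝ)⁻¹) ^ J.card := by
            apply mul_le_mul_of_nonneg_right _ (by positivity)
            exact_mod_cast hcard2 ▸ hcard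
        _ = x ^ J.card := by
            push_cast
            rw [hx, mul_pow, ← pow_mul, ← pow_mul, Nat.mul_comm]
  have step3 : ∑ J : Finset (Fin d), (if J.card ≤ K then x ^ J.card else 0)
      ≤ (K + 1 : ℝ) * ((2 : ℝ) ^ m) ^ K := by
    rw [← Finset.sum_filter]
    rw [← Finset.sum_fiberwise_of_maps_to (g := Finset.card) (t := Finset.range (K + 1))
      (fun J hJ => Finset.mem_range.mpr (Nat.lt_succ_of_le (Finset.mem_filter.mp hJ).2)) _]
    have inner : ∀ s ∈ Finset.range (K + 1),
        (∑ J ∈ (Finset.univ.filter (fun J : Finset (Fin d) => J.card ≤ K)).filter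
            (fun J => J.card = s), x ^ J.card) ≤ ((2 : ℝ) ^ m) ^ K := by
      intro s hs
      have hsK : s ≤ K := Nat.lt_succ_iff.mp (Finset.mem_range.mp hs)
      have hsub : (Finset.univ.filter (fun J : Finset (Fin d) => J.card ≤ K)).filter
          (fun J => J.card = s) ⊆ Finset.powersetCard s Finset.univ := by
        intro J hJ
        rw [Finset.mem_powersetCard_univ]
        exact (Finset.mem_filter.mp hJ).2
      have heq : (∑ J ∈ (Finset.univ.filter (fun J : Finset (Fin d) => J.card ≤ K)).filter
            (fun J => J.card = s), x ^ J.card)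
          = ∑ J ∈ (Finset.univ.filter (fun J : Finset (Fin d) => J.card ≤ K)).filter
            (fun J => J.card = s), x ^ s :=
        Finset.sum_congr rfl fun J hJ => by rw [(Finset.mem_filter.mp hJ).2]
      rw [heq]
      calc (∑ _J ∈ (Finset.univ.filter (fun J : Finset (Fin d) => J.card ≤ K)).filter
            (fun J => J.card = s), x ^ s)
          ≤ ∑ _J ∈ Finset.powersetCard s Finset.univ, x ^ s :=
            Finset.sum_le_sum_of_subset_of_nonneg hsub (fun J _ _ => by positivity)
        _ = (d.choose s : ℝ) * x ^ s := by
            rw [Finset.sum_const, Finset.card_powersetCard, Finset.card_univ,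
              Fintype.card_fin, nsmul_eq_mul]
        _ ≤ (d : ℝ) ^ s * x ^ s := by
            apply mul_le_mul_of_nonneg_right _ (by positivity)
            exact_mod_cast Nat.choose_le_pow d s
        _ = ((2 : ℝ) ^ m) ^ s := by
            rw [hx, ← mul_pow]
            congr 1
            field_simp
        _ ≤ ((2 : ℝ) ^ m) ^ K := pow_le_pow_right₀ h2m1 hsK
    calc _ ≤ ∑ _s ∈ Finset.range (K + 1), ((2 : ℝ) ^ m) ^ K := Finset.sum_le_sum inner
      _ = (K + 1 : ℝ) * ((2 : ℝ) ^ m) ^ K := by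
        rw [Finset.sum_const, Finset.card_range, nsmul_eq_mul]; push_cast; ring
  calc ∑ b : β, ((d : ℝ)⁻¹) ^ (A b).card
      ≤ ∑ J : Finset (Fin d), (if J.card ≤ K then x ^ J.card else 0) := by
        rw [step1]; exact Finset.sum_le_sum fun J _ => step2 J
    _ ≤ _ := step3


/-- The index set 𝐌 (restricted to levels `k` with `lo ≤ k ≤ L` and `c k ≠ 0`),
where a strictly increasing `k`-tuple in `{1,…,d}` is encoded as a `k`-element
subset of `Fin d`. -/
abbrev RIdx (d lo L : ℕ) (c : ℕ → ℝ) : Type :=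
  {s : Finset (Fin d) // lo ≤ s.card ∧ s.card ≤ L ∧ c s.card ≠ 0}

/-- The matrix `U`, with `U_{μ i} = N^{-1/2} ∏_{a ∈ μ} X_{a i}`. -/
def Umat (d n lo L : ℕ) (c : ℕ → ℝ) (X : Matrix (Fin d) (Fin n) ℝ) :
    Matrix (RIdx d lo L c) (Fin n) ℝ :=
  fun p i => (Real.sqrt n)⁻¹ * ∏ a ∈ p.1, X a i

/-- The diagonal value `T_μ = c_k √(k!) √(N/d^k)` for `μ ∈ 𝐌_k`. -/
def Tval (d n : ℕ) (c : ℕ → ℝ) (k : ℕ) : ℝ :=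
  c k * Real.sqrt (Nat.factorial k) * Real.sqrt ((n : ℝ) / (d : ℝ) ^ k)

/-- The deterministic diagonal matrix `T`. -/
def Tmat (d n lo L : ℕ) (c : ℕ → ℝ) : Matrix (RIdx d lo L c) (RIdx d lo L c) ℝ :=
  Matrix.diagonal fun p => Tval d n c p.1.card

/-- The diagonal matrix `D` with `D_{ii} = U_i^⊤ T U_i`. -/
def Dmat (d n lo L : ℕ) (c : ℕ → ℝ) (X : Matrix (Fin d) (Fin n) ℝ) :
    Matrix (Fin n) (Fin n) ℝ :=
  Matrix.diagonal fun i =>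
    ∑ p : RIdx d lo L c, Tval d n c p.1.card * (Umat d n lo L c X p i) ^ 2

/-- The matrix `B = U^⊤ T U − D`. -/
def Bmat (d n lo L : ℕ) (c : ℕ → ℝ) (X : Matrix (Fin d) (Fin n) ℝ) :
    Matrix (Fin n) (Fin n) ℝ :=
  (Umat d n lo L c X)ᵀ * Tmat d n lo L c * Umat d n lo L c X - Dmat d n lo L c X

/-- The resolvent `G_N(z) = (B − z)⁻¹` (as a complex matrix). -/
def GNres (d n lo L : ℕ) (c : ℕ → ℝ) (X : Matrix (Fin d) (Fin n) ℝ) (z : ℂ) :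
    Matrix (Fin n) (Fin n) ℂ :=
  ((Bmat d n lo L c X).map (fun x => (x : ℂ)) - z • 1)⁻¹

/-- The minor `G_M^{(E)}(z) = (U^{(E)} (z + D^{(E)})⁻¹ (U^{(E)})^⊤ − T⁻¹)⁻¹`,
where the columns indexed by the exclusion set `E` are removed (original labels
are kept). -/
def GME (d n lo L : ℕ) (c : ℕ → ℝ) (X : Matrix (Fin d) (Fin n) ℝ)
    (E : Finset (Fin n)) (z : ℂ) :
    Matrix (RIdx d lo L c) (RIdx d lo L c) ℂ :=
  let UE : Matrix (RIdx d lo L c) {i : Fin n // i ∉ E} ℂ :=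
    fun p i => ((Umat d n lo L c X p i.1 : ℝ) : ℂ)
  let DE : Matrix {i : Fin n // i ∉ E} {i : Fin n // i ∉ E} ℂ :=
    Matrix.diagonal fun i => (((Dmat d n lo L c X) i.1 i.1 : ℝ) : ℂ)
  (UE * (z • 1 + DE)⁻¹ * UEᵀ - ((Tmat d n lo L c).map (fun x => (x : ℂ)))⁻¹)⁻¹

/-- `G_M(z)` (no exclusion). -/
def GMres (d n lo L : ℕ) (c : ℕ → ℝ) (X : Matrix (Fin d) (Fin n) ℝ) (z : ℂ) :
    Matrix (RIdx d lo L c) (RIdx d lo L c) ℂ :=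
  GME d n lo L c X ∅ z

/-- `s(z) = (1/N) tr G_N(z)`. -/
def sFun (d n lo L : ℕ) (c : ℕ → ℝ) (X : Matrix (Fin d) (Fin n) ℝ) (z : ℂ) : ℂ :=
  (GNres d n lo L c X z).trace / n

/-- `s̃(z) = (1/M) tr (G_M(z) + T)`. -/
def sTilFun (d n lo L : ℕ) (c : ℕ → ℝ) (X : Matrix (Fin d) (Fin n) ℝ) (z : ℂ) : ℂ :=
  ((GMres d n lo L c X z) + (Tmat d n lo L c).map (fun x => (x : ℂ))).trace /
    (Fintype.card (RIdx d lo L c))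

/-- `φ = M/N`. -/
def phiVal (d n lo L : ℕ) (c : ℕ → ℝ) : ℝ := (Fintype.card (RIdx d lo L c) : ℝ) / n


set_option maxHeartbeats 2000000 in
lemma aux_Bmoment
    {Ω : Type*} [MeasurableSpace Ω] {P : Measure Ω} [IsProbabilityMeasure P]
    {μ0 : Measure ℝ} [IsProbabilityMeasure μ0]
    (hcent : ∫ x, x ∂μ0 = 0)
    (hmom : ∀ p : ℕ, Integrable (fun x => |x| ^ p) μ0)
    (d n lo L : ℕ) (hd : 1 ≤ d) (hn : 1 ≤ n) (c : ℕ → ℝ)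
    (X : Ω → Matrix (Fin d) (Fin n) ℝ)
    (hXmeas : ∀ a i, Measurable fun ω => X ω a i)
    (hXlaw : ∀ a i, Measure.map (fun ω => X ω a i) P = μ0)
    (hXindep : iIndepFun
      (fun (pr : Fin d × Fin n) ω => X ω pr.1 pr.2) P)
    (hcardL : ∀ μ : RIdx d lo L c, μ.1.card ≤ L)
    (p : ℕ) (i j : Fin n) (hij : i ≠ j) :
    Integrable (fun ω => (Bmat d n lo L c (X ω) i j) ^ (2*p)) P ∧
    ∫ ω, (Bmat d n lo L c (X ω) i j) ^ (2*p) ∂P ≤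
      ((∑ k ∈ Finset.range (L+1), (1 + |c k| * Real.sqrt (Nat.factorial k))) ^ (2*p) *
        (∑ e ∈ Finset.range (2*p+1), (1 + |∫ x, x ^ e ∂μ0|)) ^ (2*(2*p*L)) *
        ((2*p*L+1 : ℝ) * ((2:ℝ) ^ (2*p)) ^ (2*p*L))) * ((n:ℝ) ^ p)⁻¹ := by
  classical
  set m := 2 * p with hm
  have hn0 : (0:ℝ) < n := by exact_mod_cast hn
  have hd0 : (0:ℝ) < d := by exact_mod_cast hd
  set u : ℝ := (Real.sqrt n)⁻¹ with hu
  set r : ℝ := (Real.sqrt d)⁻¹ with hr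
  have hu0 : 0 ≤ u := by positivity
  have hr0 : 0 ≤ r := by positivity
  have hr1 : r ≤ 1 := by
    rw [hr]
    apply inv_le_one_of_one_le₀
    rw [show (1:ℝ) = Real.sqrt 1 from (Real.sqrt_one).symm]
    exact Real.sqrt_le_sqrt (by exact_mod_cast hd)
  set mom : ℕ → ℝ := fun e => ∫ x, x ^ e ∂μ0 with hmomdef
  set Cmax : ℝ := ∑ k ∈ Finset.range (L+1), (1 + |c k| * Real.sqrt (Nat.factorial k)) with hCmax
  set Mb : ℝ := ∑ e ∈ Finset.range (m+1), (1 + |mom e|) with hMb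
  have hCmax1 : (1:ℝ) ≤ Cmax := by
    calc (1:ℝ) ≤ 1 + |c 0| * Real.sqrt (Nat.factorial 0) :=
        le_add_of_nonneg_right (by positivity)
    _ ≤ Cmax := Finset.single_le_sum (f := fun k => 1 + |c k| * Real.sqrt (Nat.factorial k))
        (fun k _ => by positivity) (Finset.mem_range.mpr (Nat.succ_pos L))
  have hMb1 : (1:ℝ) ≤ Mb := by
    calc (1:ℝ) ≤ 1 + |mom 0| := le_add_of_nonneg_right (abs_nonneg _)
    _ ≤ Mb := Finset.single_le_sum (f := fun e => 1 + |mom e|)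
        (fun e _ => by positivity) (Finset.mem_range.mpr (Nat.succ_pos m))
  have hMble : ∀ e ≤ m, |mom e| ≤ Mb := by
    intro e he
    calc |mom e| ≤ 1 + |mom e| := by linarith [abs_nonneg (mom e)]
    _ ≤ Mb := Finset.single_le_sum (f := fun e => 1 + |mom e|)
        (fun e _ => by positivity) (Finset.mem_range.mpr (Nat.lt_succ_of_le he))
  set w : RIdx d lo L c → ℝ := fun μ => Tval d n c μ.1.card * (n:ℝ)⁻¹ with hw
  set f : Fin d × Fin n → Ω → ℝ := fun q ω => X ω q.1 q.2 with hf
  have hfmeas : ∀ q, Measurable (f q) := fun q => hXmeas q.1 q.2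
  have hfint : ∀ (q : Fin d × Fin n) (e : ℕ), Integrable (fun ω => f q ω ^ e) P :=
    fun q e => (aux_moment hmom (hXmeas q.1 q.2) (hXlaw q.1 q.2) e).1
  have hfval : ∀ (q : Fin d × Fin n) (e : ℕ), ∫ ω, f q ω ^ e ∂P = mom e :=
    fun q e => (aux_moment hmom (hXmeas q.1 q.2) (hXlaw q.1 q.2) e).2
  have hfindep : iIndepFun f P := hXindep
  have hmom1 : mom 1 = 0 := by
    rw [hmomdef]; simpa [pow_one] using hcent
  -- entry formula
  have hss : (Real.sqrt n)⁻¹ * (Real.sqrt n)⁻¹ = (n:ℝ)⁻¹ := by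
    rw [← mul_inv, Real.mul_self_sqrt (le_of_lt hn0)]
  have hentry : ∀ ω, Bmat d n lo L c (X ω) i j
      = ∑ μ : RIdx d lo L c, w μ * ∏ a ∈ μ.1, (X ω a i * X ω a j) := by
    intro ω
    have h1 : Bmat d n lo L c (X ω) i j
        = ∑ μ : RIdx d lo L c, (Umat d n lo L c (X ω) μ i * Tval d n c μ.1.card)
            * Umat d n lo L c (X ω) μ j := by
      simp only [Bmat, Matrix.sub_apply, Dmat, Matrix.diagonal_apply_ne _ hij, Matrix.mul_apply,
        Tmat, Matrix.transpose_apply, sub_zero]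
      refine Finset.sum_congr rfl fun ν _ => ?_
      congr 1
      rw [Finset.sum_eq_single ν (fun b _ hb => by
        simp [Matrix.diagonal_apply_ne _ hb]) (by simp)]
      simp [Matrix.diagonal_apply_eq]
    rw [h1]
    refine Finset.sum_congr rfl fun μ _ => ?_
    simp only [hw, Umat]
    rw [Finset.prod_mul_distrib]
    linear_combination (Tval d n c μ.1.card * (∏ a ∈ μ.1, X ω a i) * ∏ a ∈ μ.1, X ω a j) * hss
  -- w bound
  have hwbound : ∀ μ : RIdx d lo L c, |w μ| ≤ Cmax * (u * r ^ μ.1.card) := by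
    intro μ
    have hk : μ.1.card ≤ L := hcardL μ
    have hsn : Real.sqrt n ≠ 0 := ne_of_gt (Real.sqrt_pos.mpr hn0)
    have hsd : Real.sqrt d ≠ 0 := ne_of_gt (Real.sqrt_pos.mpr hd0)
    have hdk : Real.sqrt ((d:ℝ) ^ μ.1.card) = (Real.sqrt d) ^ μ.1.card := by
      rw [show ((d:ℝ)) ^ μ.1.card = ((Real.sqrt d) ^ μ.1.card) ^ 2 by
        rw [← pow_mul, mul_comm, pow_mul, Real.sq_sqrt hd0.le]]
      exact Real.sqrt_sq (by positivity)
    have hq : Real.sqrt ((n:ℝ) / (d:ℝ) ^ μ.1.card) * (n:ℝ)⁻¹ = u * r ^ μ.1.card := by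
      rw [Real.sqrt_div hn0.le, hdk, hu, hr, inv_pow]
      field_simp
      rw [Real.sq_sqrt hn0.le]
    have hwv : w μ = (c μ.1.card * Real.sqrt (Nat.factorial μ.1.card)) * (u * r ^ μ.1.card) := by
      simp only [hw, Tval]
      rw [mul_assoc, hq]
    rw [hwv, abs_mul]
    have h2 : |u * r ^ μ.1.card| = u * r ^ μ.1.card := abs_of_nonneg (by positivity)
    rw [h2]
    apply mul_le_mul_of_nonneg_right _ (by positivity)
    rw [abs_mul, abs_of_nonneg (Real.sqrt_nonneg _)]
    calc |c μ.1.card| * Real.sqrt (Nat.factorial μ.1.card)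
        ≤ 1 + |c μ.1.card| * Real.sqrt (Nat.factorial μ.1.card) :=
          le_add_of_nonneg_left zero_le_one
      _ ≤ Cmax := Finset.single_le_sum
          (f := fun k => 1 + |c k| * Real.sqrt (Nat.factorial k))
          (fun k _ => by positivity) (Finset.mem_range.mpr (Nat.lt_succ_of_le hk))
  -- per-φ notation
  set AA : (Fin m → RIdx d lo L c) → Finset (Fin d) :=
    fun φ => Finset.univ.biUnion (fun t => (φ t).1) with hAA
  set mult : (Fin m → RIdx d lo L c) → Fin d → ℕ :=
    fun φ a => ({t | a ∈ (φ t).1} : Finset (Fin m)).card with hmult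
  set SS : (Fin m → RIdx d lo L c) → Finset (Fin d × Fin n) :=
    fun φ => (AA φ) ×ˢ ({i, j} : Finset (Fin n)) with hSS
  set term : (Fin m → RIdx d lo L c) → Ω → ℝ :=
    fun φ ω => (∏ t, w (φ t)) * ∏ q ∈ SS φ, f q ω ^ (mult φ q.1) with hterm
  have hAAcard : ∀ φ, (AA φ).card ≤ m * L := by
    intro φ
    calc (AA φ).card ≤ ∑ t, (φ t).1.card := Finset.card_biUnion_le
    _ ≤ ∑ _t : Fin m, L := Finset.sum_le_sum (fun t _ => hcardL (φ t))
    _ = m * L := by simp [mul_comm]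
  -- expansion
  have hexp : ∀ ω, (Bmat d n lo L c (X ω) i j) ^ m = ∑ φ : Fin m → RIdx d lo L c, term φ ω := by
    intro ω
    rw [hentry ω]
    calc (∑ μ : RIdx d lo L c, w μ * ∏ a ∈ μ.1, (X ω a i * X ω a j)) ^ m
        = ∏ _t : Fin m, ∑ μ : RIdx d lo L c, w μ * ∏ a ∈ μ.1, (X ω a i * X ω a j) := by
          rw [Finset.prod_const, Finset.card_univ, Fintype.card_fin]
      _ = ∑ φ ∈ Fintype.piFinset (fun _ : Fin m => (Finset.univ : Finset (RIdx d lo L c))),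
            ∏ t, (w (φ t) * ∏ a ∈ (φ t).1, (X ω a i * X ω a j)) := Finset.prod_univ_sum _ _
      _ = ∑ φ : Fin m → RIdx d lo L c, term φ ω := by
          rw [Fintype.piFinset_univ]
          refine Finset.sum_congr rfl fun φ _ => ?_
          rw [Finset.prod_mul_distrib]
          simp only [hterm]
          congr 1
          rw [aux_prod_reindex (fun t => (φ t).1) (fun a => X ω a i * X ω a j)]
          simp only [hSS, hAA, hmult, hf]
          rw [Finset.prod_product]
          refine Finset.prod_congr rfl fun a _ => ?_
          rw [Finset.prod_pair hij, mul_pow]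
  -- integrability and value of each term
  have hint_term : ∀ φ, Integrable (term φ) P := by
    intro φ
    exact ((aux_prod_pow hfindep hfmeas hfint (fun q => mult φ q.1) (SS φ)).1).const_mul _
  have hval_term : ∀ φ, ∫ ω, term φ ω ∂P
      = (∏ t, w (φ t)) * ∏ q ∈ SS φ, mom (mult φ q.1) := by
    intro φ
    rw [hterm]
    simp only []
    rw [integral_const_mul, (aux_prod_pow hfindep hfmeas hfint (fun q => mult φ q.1) (SS φ)).2]
    congr 1
    exact Finset.prod_congr rfl fun q _ => hfval q _
  -- bound each term's integral
  have hCm0 : (0:ℝ) ≤ Cmax := le_trans zero_le_one hCmax1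
  have hMb0 : (0:ℝ) ≤ Mb := le_trans zero_le_one hMb1
  have hbound_term : ∀ φ, |(∏ t, w (φ t)) * ∏ q ∈ SS φ, mom (mult φ q.1)|
      ≤ Cmax ^ m * Mb ^ (2*(m*L)) * ((n:ℝ) ^ p)⁻¹ * ((d:ℝ)⁻¹) ^ ((AA φ).card) := by
    intro φ
    have hRHS0 : (0:ℝ) ≤ Cmax ^ m * Mb ^ (2*(m*L)) * ((n:ℝ) ^ p)⁻¹ := by
      apply mul_nonneg (mul_nonneg (pow_nonneg hCm0 _) (pow_nonneg hMb0 _)) (by positivity)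
    by_cases hbad : ∃ a ∈ AA φ, mult φ a = 1
    · obtain ⟨a, ha, h1⟩ := hbad
      have hz : ∏ q ∈ SS φ, mom (mult φ q.1) = 0 := by
        refine Finset.prod_eq_zero (i := ((a, i) : Fin d × Fin n)) ?_ ?_
        · simp only [hSS]
          exact Finset.mem_product.mpr ⟨ha, by simp⟩
        · show mom (mult φ a) = 0
          rw [h1, hmom1]
      rw [hz, mul_zero, abs_zero]
      exact mul_nonneg hRHS0 (by positivity)
    · push_neg at hbad
      have hge2 : ∀ a ∈ AA φ, 2 ≤ mult φ a := by
        intro a ha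
        have h1 : 1 ≤ mult φ a := by
          simp only [hAA, Finset.mem_biUnion] at ha
          obtain ⟨t, _, hat⟩ := ha
          exact Finset.card_pos.mpr ⟨t, by simp [hmult, hat]⟩
        have h2 := hbad a ha
        omega
      have hKsum : ∑ a ∈ AA φ, mult φ a = ∑ t, (φ t).1.card := aux_mult_sum _
      have h2A : 2 * (AA φ).card ≤ ∑ t, (φ t).1.card := by
        rw [← hKsum]
        calc 2 * (AA φ).card = ∑ _a ∈ AA φ, 2 := by
              rw [Finset.sum_const, smul_eq_mul, mul_comm]
          _ ≤ ∑ a ∈ AA φ, mult φ a := Finset.sum_le_sum hge2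
      have hcoef : |∏ t, w (φ t)| ≤ Cmax ^ m * (u ^ m * r ^ (∑ t, (φ t).1.card)) := by
        rw [Finset.abs_prod]
        calc ∏ t, |w (φ t)| ≤ ∏ t, (Cmax * (u * r ^ (φ t).1.card)) :=
            Finset.prod_le_prod (fun t _ => abs_nonneg _) (fun t _ => hwbound (φ t))
          _ = Cmax ^ m * (u ^ m * ∏ t, r ^ (φ t).1.card) := by
              rw [Finset.prod_mul_distrib, Finset.prod_mul_distrib, Finset.prod_const,
                Finset.prod_const, Finset.card_univ, Fintype.card_fin]
          _ = Cmax ^ m * (u ^ m * r ^ (∑ t, (φ t).1.card)) := by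
              rw [Finset.prod_pow_eq_pow_sum]
      have hrK : r ^ (∑ t, (φ t).1.card) ≤ ((d:ℝ)⁻¹) ^ (AA φ).card := by
        calc r ^ (∑ t, (φ t).1.card) ≤ r ^ (2 * (AA φ).card) :=
            pow_le_pow_of_le_one hr0 hr1 h2A
          _ = ((d:ℝ)⁻¹) ^ (AA φ).card := by
            rw [hr, inv_pow, pow_mul, Real.sq_sqrt hd0.le, inv_pow]
      have hum : u ^ m = ((n:ℝ) ^ p)⁻¹ := by
        rw [hu, hm, inv_pow, pow_mul, Real.sq_sqrt hn0.le]
      have hmomb : |∏ q ∈ SS φ, mom (mult φ q.1)| ≤ Mb ^ (2*(m*L)) := by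
        rw [Finset.abs_prod]
        have hcardSS : (SS φ).card = (AA φ).card * 2 := by
          simp only [hSS]
          rw [Finset.card_product, Finset.card_pair hij]
        calc ∏ q ∈ SS φ, |mom (mult φ q.1)|
            ≤ ∏ _q ∈ SS φ, Mb :=
              Finset.prod_le_prod (fun q _ => abs_nonneg _) (fun q _ => hMble _ (by
                calc mult φ q.1 ≤ (Finset.univ : Finset (Fin m)).card :=
                    Finset.card_filter_le _ _
                  _ = m := by rw [Finset.card_univ, Fintype.card_fin]))
          _ = Mb ^ (SS φ).card := Finset.prod_const _
          _ = Mb ^ ((AA φ).card * 2) := by rw [hcardSS]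
          _ ≤ Mb ^ (2*(m*L)) := pow_le_pow_right₀ hMb1 (by
              have := hAAcard φ; omega)
      calc |(∏ t, w (φ t)) * ∏ q ∈ SS φ, mom (mult φ q.1)|
          = |∏ t, w (φ t)| * |∏ q ∈ SS φ, mom (mult φ q.1)| := abs_mul _ _
        _ ≤ (Cmax ^ m * (u ^ m * r ^ (∑ t, (φ t).1.card))) * Mb ^ (2*(m*L)) :=
            mul_le_mul hcoef hmomb (abs_nonneg _)
              (mul_nonneg (pow_nonneg hCm0 _) (by positivity))
        _ = Cmax ^ m * Mb ^ (2*(m*L)) * ((n:ℝ) ^ p)⁻¹ * r ^ (∑ t, (φ t).1.card) := by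
            rw [hum]; ring
        _ ≤ Cmax ^ m * Mb ^ (2*(m*L)) * ((n:ℝ) ^ p)⁻¹ * ((d:ℝ)⁻¹) ^ (AA φ).card :=
            mul_le_mul_of_nonneg_left hrK hRHS0
  -- assemble
  have hintB : Integrable (fun ω => (Bmat d n lo L c (X ω) i j) ^ m) P := by
    have : (fun ω => (Bmat d n lo L c (X ω) i j) ^ m)
        = fun ω => ∑ φ : Fin m → RIdx d lo L c, term φ ω := funext fun ω => hexp ω
    rw [this]
    exact integrable_finset_sum _ (fun φ _ => hint_term φ)
  refine ⟨hintB, ?_⟩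
  have hval : ∫ ω, (Bmat d n lo L c (X ω) i j) ^ m ∂P
      = ∑ φ : Fin m → RIdx d lo L c, ((∏ t, w (φ t)) * ∏ q ∈ SS φ, mom (mult φ q.1)) := by
    have h1 : (fun ω => (Bmat d n lo L c (X ω) i j) ^ m)
        = fun ω => ∑ φ : Fin m → RIdx d lo L c, term φ ω := funext fun ω => hexp ω
    rw [h1, integral_finset_sum _ (fun φ _ => hint_term φ)]
    exact Finset.sum_congr rfl fun φ _ => hval_term φ
  rw [hval]
  have hcount : ∑ φ : Fin m → RIdx d lo L c, ((d:ℝ)⁻¹) ^ ((AA φ).card)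
      ≤ (m*L+1 : ℝ) * ((2:ℝ) ^ m) ^ (m*L) := by
    have hinj : Function.Injective (fun (φ : Fin m → RIdx d lo L c) (t : Fin m) => (φ t).1) := by
      intro φ φ' h
      funext t
      exact Subtype.ext (congrFun h t)
    simpa using aux_count hd _ hinj (fun φ => hAAcard φ)
  calc ∑ φ : Fin m → RIdx d lo L c, ((∏ t, w (φ t)) * ∏ q ∈ SS φ, mom (mult φ q.1))
      ≤ ∑ φ : Fin m → RIdx d lo L c, |(∏ t, w (φ t)) * ∏ q ∈ SS φ, mom (mult φ q.1)| :=
        Finset.sum_le_sum fun φ _ => le_abs_self _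
    _ ≤ ∑ φ : Fin m → RIdx d lo L c,
          Cmax ^ m * Mb ^ (2*(m*L)) * ((n:ℝ) ^ p)⁻¹ * ((d:ℝ)⁻¹) ^ ((AA φ).card) :=
        Finset.sum_le_sum fun φ _ => hbound_term φ
    _ = Cmax ^ m * Mb ^ (2*(m*L)) * ((n:ℝ) ^ p)⁻¹
          * ∑ φ : Fin m → RIdx d lo L c, ((d:ℝ)⁻¹) ^ ((AA φ).card) := by
        rw [← Finset.mul_sum]
    _ ≤ Cmax ^ m * Mb ^ (2*(m*L)) * ((n:ℝ) ^ p)⁻¹ * ((m*L+1 : ℝ) * ((2:ℝ) ^ m) ^ (m*L)) := by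
        apply mul_le_mul_of_nonneg_left hcount
        have h1 : (0:ℝ) ≤ Cmax := le_trans zero_le_one hCmax1
        have h2 : (0:ℝ) ≤ Mb := le_trans zero_le_one hMb1
        positivity
    _ = (Cmax ^ m * Mb ^ (2*(m*L)) * ((m*L+1 : ℝ) * ((2:ℝ) ^ m) ^ (m*L))) * ((n:ℝ) ^ p)⁻¹ := by
        ring
    _ = (Cmax ^ m * Mb ^ (2*(m*L)) * ((2*(p:ℝ)*(L:ℝ)+1) * ((2:ℝ) ^ m) ^ (m*L))) * ((n:ℝ) ^ p)⁻¹ := by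
        rw [hm]; push_cast; ring

/-- Lemma 6.1 of the paper: `max_{j} ‖B_j‖ ≺ 1`, where `B_j` is
the `j`-th column of `B` with the `(j,j)` entry removed. -/
theorem bcolumn_norm
    {Ω : Type*} [MeasurableSpace Ω] (P : Measure Ω) [IsProbabilityMeasure P]
    (μ0 : Measure ℝ) [IsProbabilityMeasure μ0]
    (hcent : ∫ x, x ∂μ0 = 0) (hvar : ∫ x, x ^ 2 ∂μ0 = 1)
    (hmom : ∀ p : ℕ, Integrable (fun x => |x| ^ p) μ0)
    (ℓ : ℝ) (hℓ : 0 < ℓ)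
    (L : ℕ) (hLpos : 0 < L) (hL : Nat.ceil ℓ ≤ L)
    (c : ℕ → ℝ) (hc : ∃ k, Nat.ceil ℓ ≤ k ∧ k ≤ L ∧ c k ≠ 0)
    (Nf : ℕ → ℕ)
    (hNf : ∃ C₁ C₂ : ℝ, 0 < C₁ ∧ ∀ d : ℕ, 1 ≤ d →
      C₁ * (d : ℝ) ^ ℓ ≤ (Nf d : ℝ) ∧ (Nf d : ℝ) ≤ C₂ * (d : ℝ) ^ ℓ)
    (X : ∀ d : ℕ, Ω → Matrix (Fin d) (Fin (Nf d)) ℝ)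
    (hXmeas : ∀ d a i, Measurable fun ω => X d ω a i)
    (hXlaw : ∀ d a i, Measure.map (fun ω => X d ω a i) P = μ0)
    (hXindep : ∀ d, iIndepFun
      (fun (pr : Fin d × Fin (Nf d)) ω => X d ω pr.1 pr.2) P)
    :
    ∀ ε > (0 : ℝ), ∀ D > (0 : ℝ), ∃ C : ℝ, ∃ d₀ : ℕ, ∀ d ≥ d₀,
      P {ω | ∃ j : Fin (Nf d), (Nf d : ℝ) ^ ε ≤
          Real.sqrt (∑ i ∈ Finset.univ.erase j,
            (Bmat d (Nf d) (Nat.ceil ℓ) L c (X d ω) i j) ^ 2)} ≤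
        ENNReal.ofReal (C * (Nf d : ℝ) ^ (-D)) := by
  intro ε hε D hD
  obtain ⟨C₁, C₂, hC₁pos, hNbd⟩ := hNf
  obtain ⟨p, hp⟩ : ∃ p : ℕ, D + 2 ≤ 2 * p * ε := by
    refine ⟨⌈(D+2)/(2*ε)⌉₊, ?_⟩
    have h1 : (D+2)/(2*ε) ≤ (⌈(D+2)/(2*ε)⌉₊ : ℝ) := Nat.le_ceil _
    rw [div_le_iff₀ (by linarith)] at h1
    nlinarith
  set m := 2 * p with hm
  set C0 : ℝ := ((∑ k ∈ Finset.range (L+1), (1 + |c k| * Real.sqrt (Nat.factorial k))) ^ (2*p) *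
        (∑ e ∈ Finset.range (2*p+1), (1 + |∫ x, x ^ e ∂μ0|)) ^ (2*(2*p*L)) *
        ((2*(p:ℝ)*(L:ℝ)+1) * ((2:ℝ) ^ (2*p)) ^ (2*p*L))) with hC0
  have hC00 : 0 ≤ C0 := by
    rw [hC0]
    have h1 : 0 ≤ ∑ k ∈ Finset.range (L+1), (1 + |c k| * Real.sqrt (Nat.factorial k)) :=
      Finset.sum_nonneg fun k _ => by positivity
    have h2 : 0 ≤ ∑ e ∈ Finset.range (2*p+1), (1 + |∫ x, x ^ e ∂μ0|) :=
      Finset.sum_nonneg fun e _ => by positivity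
    positivity
  refine ⟨C0, 1, fun d hd => ?_⟩
  have hd0R : (0:ℝ) < d := by exact_mod_cast hd
  set n := Nf d with hn
  have hn1 : 1 ≤ n := by
    rcases Nat.eq_zero_or_pos n with h0 | h1
    · exfalso
      have h2 := (hNbd d hd).1
      have h3 : (0:ℝ) < C₁ * (d:ℝ) ^ ℓ := mul_pos hC₁pos (Real.rpow_pos_of_pos hd0R ℓ)
      rw [← hn, h0] at h2
      simp only [Nat.cast_zero] at h2
      linarith
    · exact h1
  have hn0R : (0:ℝ) < n := by exact_mod_cast hn1
  have hn1R : (1:ℝ) ≤ n := by exact_mod_cast hn1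
  set τ : ℝ := ((n:ℝ) ^ ε) ^ 2 / n with hτ
  have hτpos : 0 < τ := div_pos (pow_pos (Real.rpow_pos_of_pos hn0R ε) 2) hn0R
  -- per-pair bound
  have hpair : ∀ i j : Fin n,
      P {ω | i ≠ j ∧ τ ≤ (Bmat d n (Nat.ceil ℓ) L c (X d ω) i j)^2}
        ≤ ENNReal.ofReal (C0 * (((n:ℝ) ^ ε) ^ m)⁻¹) := by
    intro i j
    by_cases hij : i = j
    · have : {ω | i ≠ j ∧ τ ≤ (Bmat d n (Nat.ceil ℓ) L c (X d ω) i j)^2} = ∅ := by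
        ext ω; simp [hij]
      rw [this]
      simp
    · obtain ⟨hint, hbd⟩ := aux_Bmoment hcent hmom d n (Nat.ceil ℓ) L hd hn1 c (X d)
        (hXmeas d) (hXlaw d) (hXindep d) (fun μ => μ.2.2.1) p i j hij
      rw [← hC0] at hbd
      have hnonneg : 0 ≤ᵐ[P] fun ω => (Bmat d n (Nat.ceil ℓ) L c (X d ω) i j) ^ (2*p) := by
        refine ae_of_all _ fun ω => ?_
        show (0:ℝ) ≤ (Bmat d n (Nat.ceil ℓ) L c (X d ω) i j) ^ (2*p)
        rw [pow_mul]
        positivity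
      have hmarkov := mul_meas_ge_le_integral_of_nonneg hnonneg hint (τ ^ p)
      have hτp : 0 < τ ^ p := pow_pos hτpos p
      have hsubset : {ω | i ≠ j ∧ τ ≤ (Bmat d n (Nat.ceil ℓ) L c (X d ω) i j)^2}
          ⊆ {ω | τ^p ≤ (Bmat d n (Nat.ceil ℓ) L c (X d ω) i j)^(2*p)} := by
        intro ω hω
        have h1 : τ ≤ (Bmat d n (Nat.ceil ℓ) L c (X d ω) i j)^2 := hω.2
        have h2 : τ^p ≤ ((Bmat d n (Nat.ceil ℓ) L c (X d ω) i j)^2)^p :=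
          pow_le_pow_left₀ hτpos.le h1 p
        rwa [← pow_mul] at h2
      have h2 : (P {ω | τ^p ≤ (Bmat d n (Nat.ceil ℓ) L c (X d ω) i j)^(2*p)}).toReal
          ≤ (C0 * ((n:ℝ)^p)⁻¹) / τ^p := by
        rw [le_div_iff₀ hτp]
        calc (P {ω | τ^p ≤ (Bmat d n (Nat.ceil ℓ) L c (X d ω) i j)^(2*p)}).toReal * τ^p
            = τ^p * (P {ω | τ^p ≤ (Bmat d n (Nat.ceil ℓ) L c (X d ω) i j)^(2*p)}).toReal :=
              mul_comm _ _
          _ ≤ ∫ ω, (Bmat d n (Nat.ceil ℓ) L c (X d ω) i j)^(2*p) ∂P := hmarkov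
          _ ≤ C0 * ((n:ℝ)^p)⁻¹ := hbd
      have h3 : P {ω | τ^p ≤ (Bmat d n (Nat.ceil ℓ) L c (X d ω) i j)^(2*p)}
          ≤ ENNReal.ofReal ((C0 * ((n:ℝ)^p)⁻¹) / τ^p) := by
        rw [← ENNReal.ofReal_toReal (measure_ne_top P _)]
        exact ENNReal.ofReal_le_ofReal h2
      refine le_trans (le_trans (measure_mono hsubset) h3) (ENNReal.ofReal_le_ofReal ?_)
      have hτpval : τ ^ p = ((n:ℝ)^ε)^m / (n:ℝ)^p := by
        rw [hτ, div_pow, ← pow_mul, ← hm]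
      rw [hτpval]
      have heq : (C0 * ((n:ℝ)^p)⁻¹) / (((n:ℝ)^ε)^m / (n:ℝ)^p) = C0 * (((n:ℝ)^ε)^m)⁻¹ := by
        have hnp : ((n:ℝ)^p) ≠ 0 := by positivity
        have hne : (((n:ℝ)^ε)^m) ≠ 0 := by
          have : (0:ℝ) < (n:ℝ)^ε := Real.rpow_pos_of_pos hn0R ε
          positivity
        field_simp
      rw [heq]
  -- event subset of union
  have hsub : {ω | ∃ j : Fin n, (n : ℝ) ^ ε ≤
        Real.sqrt (∑ i ∈ Finset.univ.erase j, (Bmat d n (Nat.ceil ℓ) L c (X d ω) i j) ^ 2)}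
      ⊆ ⋃ j : Fin n, ⋃ i : Fin n,
          {ω | i ≠ j ∧ τ ≤ (Bmat d n (Nat.ceil ℓ) L c (X d ω) i j)^2} := by
    intro ω hω
    obtain ⟨j, hj⟩ := hω
    have hS0 : 0 ≤ ∑ i ∈ Finset.univ.erase j, (Bmat d n (Nat.ceil ℓ) L c (X d ω) i j)^2 :=
      Finset.sum_nonneg fun i _ => sq_nonneg _
    have h1 : ((n:ℝ)^ε)^2 ≤ ∑ i ∈ Finset.univ.erase j, (Bmat d n (Nat.ceil ℓ) L c (X d ω) i j)^2 := by
      have h2 := pow_le_pow_left₀ (Real.rpow_nonneg n.cast_nonneg ε) hj 2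
      rwa [Real.sq_sqrt hS0] at h2
    by_contra hcon
    simp only [Set.mem_iUnion, Set.mem_setOf_eq, not_exists] at hcon
    push_neg at hcon
    have hall : ∀ i ∈ Finset.univ.erase j, (Bmat d n (Nat.ceil ℓ) L c (X d ω) i j)^2 ≤ τ := by
      intro i hi
      have hij : i ≠ j := Finset.ne_of_mem_erase hi
      exact le_of_lt (hcon j i hij)
    have hsum := Finset.sum_le_card_nsmul _ _ τ hall
    have hcard : (Finset.univ.erase j).card = n - 1 := by
      rw [Finset.card_erase_of_mem (Finset.mem_univ j), Finset.card_univ, Fintype.card_fin]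
    rw [hcard, nsmul_eq_mul] at hsum
    have hc1 : ((n - 1 : ℕ) : ℝ) = (n:ℝ) - 1 := by
      rw [Nat.cast_sub hn1, Nat.cast_one]
    rw [hc1] at hsum
    have hnτ : (n:ℝ) * τ = ((n:ℝ)^ε)^2 := by
      rw [hτ]
      field_simp
    nlinarith
  -- assemble
  calc P {ω | ∃ j : Fin n, (n : ℝ) ^ ε ≤
        Real.sqrt (∑ i ∈ Finset.univ.erase j, (Bmat d n (Nat.ceil ℓ) L c (X d ω) i j) ^ 2)}
      ≤ P (⋃ j : Fin n, ⋃ i : Fin n,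
          {ω | i ≠ j ∧ τ ≤ (Bmat d n (Nat.ceil ℓ) L c (X d ω) i j)^2}) := measure_mono hsub
    _ ≤ ∑' j : Fin n, P (⋃ i : Fin n,
          {ω | i ≠ j ∧ τ ≤ (Bmat d n (Nat.ceil ℓ) L c (X d ω) i j)^2}) := measure_iUnion_le _
    _ ≤ ∑' j : Fin n, ∑' i : Fin n,
          P {ω | i ≠ j ∧ τ ≤ (Bmat d n (Nat.ceil ℓ) L c (X d ω) i j)^2} :=
        ENNReal.tsum_le_tsum (fun j => measure_iUnion_le _)
    _ ≤ ∑' _j : Fin n, ∑' _i : Fin n, ENNReal.ofReal (C0 * (((n:ℝ) ^ ε) ^ m)⁻¹) :=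
        ENNReal.tsum_le_tsum (fun j => ENNReal.tsum_le_tsum (fun i => hpair i j))
    _ = (n : ℝ≥0∞) * ((n : ℝ≥0∞) * ENNReal.ofReal (C0 * (((n:ℝ) ^ ε) ^ m)⁻¹)) := by
        simp [tsum_fintype, Finset.sum_const, Finset.card_univ, nsmul_eq_mul, mul_assoc]
    _ ≤ ENNReal.ofReal (C0 * (n:ℝ) ^ (-D)) := by
        have hx0 : 0 ≤ C0 * (((n:ℝ) ^ ε) ^ m)⁻¹ := by
          have : (0:ℝ) < (n:ℝ)^ε := Real.rpow_pos_of_pos hn0R ε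
          positivity
        rw [show ((n : ℕ) : ℝ≥0∞) = ENNReal.ofReal (n:ℝ) by
              rw [ENNReal.ofReal_natCast],
          ← ENNReal.ofReal_mul hn0R.le, ← ENNReal.ofReal_mul hn0R.le]
        apply ENNReal.ofReal_le_ofReal
        have hεm : ((n:ℝ)^ε)^m = (n:ℝ)^(ε * (m:ℝ)) := by
          rw [← Real.rpow_natCast ((n:ℝ)^ε) m, ← Real.rpow_mul hn0R.le]
        have h3 : (n:ℝ)^(2:ℝ) * ((n:ℝ)^(ε*(m:ℝ)))⁻¹ = (n:ℝ)^(2 - ε*(m:ℝ)) := by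
          rw [← Real.rpow_neg hn0R.le, ← Real.rpow_add hn0R]
          ring_nf
        have h4 : (n:ℝ)^(2 - ε*(m:ℝ)) ≤ (n:ℝ)^(-D) := by
          apply Real.rpow_le_rpow_of_exponent_le hn1R
          have hmr : (m:ℝ) = 2*(p:ℝ) := by rw [hm]; push_cast; ring
          rw [hmr]
          nlinarith
        have h2 : (n:ℝ) * (n:ℝ) = (n:ℝ)^(2:ℝ) := by
          rw [show (2:ℝ) = ((2:ℕ):ℝ) by norm_num, Real.rpow_natCast]
          ring
        calc (n:ℝ) * ((n:ℝ) * (C0 * (((n:ℝ)^ε)^m)⁻¹))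
            = C0 * ((n:ℝ)^(2:ℝ) * ((n:ℝ)^(ε*(m:ℝ)))⁻¹) := by rw [hεm, ← h2]; ring
          _ = C0 * (n:ℝ)^(2 - ε*(m:ℝ)) := by rw [h3]
          _ ≤ C0 * (n:ℝ)^(-D) := mul_le_mul_of_nonneg_left h4 hC00
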